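/- Let l_S, l_T : ℝ^d → ℝ be twice continuously differentiable with L-Lipschitz gradients (equivalently, ‖∇²l_S(w)‖ ≤ L and ‖∇²l_T(w)‖ ≤ L for all w), let α ≥ 0 and N ≥ 1. For w ∈ ℝ^d let w̃_0 = w and w̃_{j+1} = w̃_j − α∇l_S(w̃_j) be the gradient-descent path on l_S, and define ∇L(w) := (I − α∇²l_S(w̃_0))(I − α∇²l_S(w̃_1))⋯(I − α∇²l_S(w̃_{N−1}))∇l_T(w̃_N) (matrix product with the j = 0 factor leftmost). Then ‖∇l_T(w) − ∇L(w)‖ ≤ ((1 + αL)^N − 1)·‖∇l_T(w)‖ + (1 + αL)^N·((1 + αL)^N − 1)·‖∇l_S(w)‖. -/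

import Mathlib

noncomputable section



variable {d : ℕ}

local notation "E" => EuclideanSpace ℝ (Fin d)

lemma grad_differentiable {f : E → ℝ} (hf : ContDiff ℝ 2 f) :
    Differentiable ℝ (gradient f) := by
  have h1 : ContDiff ℝ 1 (fderiv ℝ f) := hf.fderiv_right (by norm_num)
  have : gradient f = fun x => (InnerProductSpace.toDual ℝ E).symm (fderiv ℝ f x) := rfl
  rw [this]
  exact (InnerProductSpace.toDual ℝ E).symm.toContinuousLinearEquiv.differentiable.comp
    (h1.differentiable (by norm_num))

lemma grad_lip {f : E → ℝ} {L : ℝ} (hf : ContDiff ℝ 2 f)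
    (hL : ∀ w, ‖fderiv ℝ (gradient f) w‖ ≤ L) (a b : E) :
    ‖gradient f a - gradient f b‖ ≤ L * ‖a - b‖ := by
  exact convex_univ.norm_image_sub_le_of_norm_fderiv_le
    (fun x _ => (grad_differentiable hf).differentiableAt)
    (fun x _ => hL x) (Set.mem_univ b) (Set.mem_univ a)

set_option maxHeartbeats 1000000 in
/-- Lemma D.9: distance between the test gradient and the
finite-sum MAML meta-gradient.  The inner loop runs gradient descent on `l_S` and
the outer loss is `l_T`; `∇²l_S` is realized as `fderiv ℝ (gradient l_S)` and the
product is ordered with the `j = 0` factor leftmost. -/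
theorem finite_sum_maml_meta_gradient_vs_gradient (d : ℕ)
    (lS lT : EuclideanSpace ℝ (Fin d) → ℝ) (L α : ℝ) (N : ℕ)
    (hlS : ContDiff ℝ 2 lS) (hlT : ContDiff ℝ 2 lT)
    (hLS : ∀ w, ‖fderiv ℝ (gradient lS) w‖ ≤ L)
    (hLT : ∀ w, ‖fderiv ℝ (gradient lT) w‖ ≤ L)
    (hα : 0 ≤ α) (hN : 1 ≤ N)
    (w : EuclideanSpace ℝ (Fin d)) (wp : ℕ → EuclideanSpace ℝ (Fin d))
    (hwp0 : wp 0 = w)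
    (hwpS : ∀ j, wp (j + 1) = wp j - α • gradient lS (wp j)) :
    ‖gradient lT w -
        (((List.range N).map (fun j =>
            (1 : EuclideanSpace ℝ (Fin d) →L[ℝ] EuclideanSpace ℝ (Fin d))
              - α • fderiv ℝ (gradient lS) (wp j))).prod)
          (gradient lT (wp N))‖
      ≤ ((1 + α * L) ^ N - 1) * ‖gradient lT w‖
        + (1 + α * L) ^ N * ((1 + α * L) ^ N - 1) * ‖gradient lS w‖ := by
  have hL0 : 0 ≤ L := le_trans (norm_nonneg _) (hLS w)
  set x : ℝ := 1 + α * L with hx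
  have hx1 : 1 ≤ x := by nlinarith
  have hx0 : 0 ≤ x := by linarith
  set A : ℕ → EuclideanSpace ℝ (Fin d) →L[ℝ] EuclideanSpace ℝ (Fin d) :=
    fun j => (1 : EuclideanSpace ℝ (Fin d) →L[ℝ] EuclideanSpace ℝ (Fin d))
      - α • fderiv ℝ (gradient lS) (wp j) with hA
  set P : ℕ → EuclideanSpace ℝ (Fin d) →L[ℝ] EuclideanSpace ℝ (Fin d) :=
    fun n => (((List.range n).map A).prod) with hP
  have hPsucc : ∀ n, P (n + 1) = P n * A n := by
    intro n
    simp [hP, List.range_succ]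
  have hAnorm : ∀ n, ‖A n‖ ≤ x := by
    intro n
    calc ‖A n‖ ≤ ‖(1 : EuclideanSpace ℝ (Fin d) →L[ℝ] EuclideanSpace ℝ (Fin d))‖
          + ‖α • fderiv ℝ (gradient lS) (wp n)‖ := norm_sub_le _ _
      _ ≤ 1 + α * L := by
          have hone : ‖(1 : EuclideanSpace ℝ (Fin d) →L[ℝ] EuclideanSpace ℝ (Fin d))‖ ≤ 1 :=
            ContinuousLinearMap.norm_id_le
          have h2 : ‖α • fderiv ℝ (gradient lS) (wp n)‖ ≤ α * ‖fderiv ℝ (gradient lS) (wp n)‖ := by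
            have := norm_smul_le α (fderiv ℝ (gradient lS) (wp n))
            rwa [Real.norm_of_nonneg hα] at this
          have h3 := hLS (wp n)
          nlinarith [norm_nonneg (fderiv ℝ (gradient lS) (wp n)), hone]
  have hPnorm : ∀ n, ‖P n‖ ≤ x ^ n := by
    intro n
    induction n with
    | zero =>
      have hP0 : P 0 = 1 := by simp [hP]
      rw [hP0, pow_zero]
      exact ContinuousLinearMap.norm_id_le
    | succ n ih =>
      rw [hPsucc n, pow_succ]
      exact le_trans (ContinuousLinearMap.opNorm_comp_le _ _)
        (mul_le_mul ih (hAnorm n) (norm_nonneg _) (pow_nonneg hx0 n))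
  have hIP : ∀ n, ‖(1 : EuclideanSpace ℝ (Fin d) →L[ℝ] EuclideanSpace ℝ (Fin d)) - P n‖
      ≤ x ^ n - 1 := by
    intro n
    induction n with
    | zero =>
      have hP0 : P 0 = 1 := by simp [hP]
      rw [hP0, sub_self, norm_zero, pow_zero, sub_self]
    | succ n ih =>
      have key : (1 : EuclideanSpace ℝ (Fin d) →L[ℝ] EuclideanSpace ℝ (Fin d)) - P (n + 1)
          = (1 - P n) * A n + (1 - A n) := by
        rw [hPsucc n, sub_mul, one_mul]; abel
      rw [key]
      calc ‖(1 - P n) * A n + (1 - A n)‖ ≤ ‖(1 - P n) * A n‖ + ‖1 - A n‖ := norm_add_le _ _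
        _ ≤ ‖1 - P n‖ * ‖A n‖ + ‖1 - A n‖ := by
            have := norm_mul_le (1 - P n) (A n)
            linarith
        _ ≤ (x ^ n - 1) * x + (α * L) := by
            have h1 : ‖(1 : EuclideanSpace ℝ (Fin d) →L[ℝ] EuclideanSpace ℝ (Fin d)) - A n‖
                ≤ α * L := by
              have : (1 : EuclideanSpace ℝ (Fin d) →L[ℝ] EuclideanSpace ℝ (Fin d)) - A n
                  = α • fderiv ℝ (gradient lS) (wp n) := by rw [hA]; exact sub_sub_cancel _ _
              rw [this]
              calc ‖α • fderiv ℝ (gradient lS) (wp n)‖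
                  ≤ ‖α‖ * ‖fderiv ℝ (gradient lS) (wp n)‖ := by
                    have := norm_smul_le α (fderiv ℝ (gradient lS) (wp n)); exact this
                _ ≤ α * L := by
                    rw [Real.norm_of_nonneg hα]
                    exact mul_le_mul_of_nonneg_left (hLS (wp n)) hα
            have h2 : 0 ≤ x ^ n - 1 := by
              have := one_le_pow₀ hx1 (n := n)
              linarith
            nlinarith [hAnorm n, norm_nonneg (1 - P n)]
        _ = x ^ (n + 1) - 1 := by rw [pow_succ]; ring
  -- bound on inner gradients along the path
  have hlipS := grad_lip hlS hLS
  have hlipT := grad_lip hlT hLT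
  have hgS : ∀ n, ‖gradient lS (wp n)‖ ≤ x ^ n * ‖gradient lS w‖ := by
    intro n
    induction n with
    | zero => simp [hwp0]
    | succ n ih =>
      have hstep : ‖wp (n + 1) - wp n‖ = α * ‖gradient lS (wp n)‖ := by
        rw [hwpS n]
        simp [norm_smul, Real.norm_of_nonneg hα]
      calc ‖gradient lS (wp (n + 1))‖
          ≤ ‖gradient lS (wp (n + 1)) - gradient lS (wp n)‖ + ‖gradient lS (wp n)‖ := by
            simpa using norm_add_le (gradient lS (wp (n+1)) - gradient lS (wp n))
              (gradient lS (wp n))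
        _ ≤ L * ‖wp (n + 1) - wp n‖ + ‖gradient lS (wp n)‖ := by
            linarith [hlipS (wp (n+1)) (wp n)]
        _ = x * ‖gradient lS (wp n)‖ := by rw [hstep]; ring
        _ ≤ x * (x ^ n * ‖gradient lS w‖) := mul_le_mul_of_nonneg_left ih hx0
        _ = x ^ (n + 1) * ‖gradient lS w‖ := by ring
  have hdist : ∀ n, L * ‖w - wp n‖ ≤ (x ^ n - 1) * ‖gradient lS w‖ := by
    intro n
    induction n with
    | zero => simp [hwp0]
    | succ n ih =>
      have hstep : ‖wp n - wp (n + 1)‖ = α * ‖gradient lS (wp n)‖ := by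
        rw [hwpS n]
        simp [norm_smul, Real.norm_of_nonneg hα]
      calc L * ‖w - wp (n + 1)‖
          ≤ L * (‖w - wp n‖ + ‖wp n - wp (n + 1)‖) := by
            have := norm_sub_le_norm_sub_add_norm_sub w (wp n) (wp (n+1))
            nlinarith
        _ = L * ‖w - wp n‖ + L * (α * ‖gradient lS (wp n)‖) := by rw [hstep]; ring
        _ ≤ (x ^ n - 1) * ‖gradient lS w‖ + L * α * (x ^ n * ‖gradient lS w‖) := by
            nlinarith [hgS n, mul_le_mul_of_nonneg_left (hgS n) (mul_nonneg hL0 hα)]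
        _ = (x ^ (n + 1) - 1) * ‖gradient lS w‖ := by rw [pow_succ]; ring
  -- main decomposition
  have hdecomp : gradient lT w - (P N) (gradient lT (wp N))
      = ((1 : EuclideanSpace ℝ (Fin d) →L[ℝ] EuclideanSpace ℝ (Fin d)) - P N) (gradient lT w)
        + (P N) (gradient lT w - gradient lT (wp N)) := by
    simp only [ContinuousLinearMap.sub_apply, ContinuousLinearMap.one_apply, map_sub]
    abel
  have hgoal : ‖gradient lT w - (P N) (gradient lT (wp N))‖
      ≤ (x ^ N - 1) * ‖gradient lT w‖ + x ^ N * ((x ^ N - 1) * ‖gradient lS w‖) := by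
    rw [hdecomp]
    have b1 : ‖((1 : EuclideanSpace ℝ (Fin d) →L[ℝ] EuclideanSpace ℝ (Fin d)) - P N)
        (gradient lT w)‖ ≤ (x ^ N - 1) * ‖gradient lT w‖ :=
      le_trans (ContinuousLinearMap.le_opNorm _ _)
        (mul_le_mul_of_nonneg_right (hIP N) (norm_nonneg _))
    have b2 : ‖(P N) (gradient lT w - gradient lT (wp N))‖
        ≤ x ^ N * ((x ^ N - 1) * ‖gradient lS w‖) := by
      have h1 : ‖gradient lT w - gradient lT (wp N)‖ ≤ (x ^ N - 1) * ‖gradient lS w‖ :=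
        le_trans (hlipT w (wp N)) (hdist N)
      exact le_trans (ContinuousLinearMap.le_opNorm _ _)
        (mul_le_mul (hPnorm N) h1 (norm_nonneg _) (pow_nonneg hx0 N))
    exact le_trans (norm_add_le _ _) (add_le_add b1 b2)
  calc ‖gradient lT w - (P N) (gradient lT (wp N))‖
      ≤ (x ^ N - 1) * ‖gradient lT w‖ + x ^ N * ((x ^ N - 1) * ‖gradient lS w‖) := hgoal
    _ = ((1 + α * L) ^ N - 1) * ‖gradient lT w‖
        + (1 + α * L) ^ N * ((1 + α * L) ^ N - 1) * ‖gradient lS w‖ := by rw [hx]; ring
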